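/- Let \varphi(z) = a z^M with 0 < |a| < 1 and M \geq 3 an integer, and suppose \lambda is a nonzero complex number and f is analytic on the unit disk with f'(\varphi(z)) = \lambda f(z) for all z in the disk. Then f = 0. Consequently D_\varphi on S^p has no nonzero eigenvalues when M \geq 3. -/

import Mathlib

open Metric Filter Topology

/-- For `φ(z) = a z^M` with `0 < |a| < 1` and `M ≥ 3`, if `λ ≠ 0` and `f` is analytic on
the unit disk with `f'(φ(z)) = λ f(z)` on the disk, then `f = 0`; i.e. `D_φ` has no
nonzero eigenvalues when `M ≥ 3`. -/
theorem stmt5 (a : ℂ) (ha0 : a ≠ 0) (ha : ‖a‖ < 1) (M : ℕ) (hM : 3 ≤ M)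
    (lam : ℂ) (hlam : lam ≠ 0) (f : ℂ → ℂ)
    (hf : DifferentiableOn ℂ f (ball 0 1))
    (heig : ∀ z ∈ ball (0 : ℂ) 1, deriv f (a * z ^ M) = lam * f z) :
    ∀ z ∈ ball (0 : ℂ) 1, f z = 0 := by
  have hball : IsOpen (ball (0:ℂ) 1) := isOpen_ball
  have hfa : AnalyticOnNhd ℂ f (ball 0 1) := hf.analyticOnNhd hball
  have h0mem : (0:ℂ) ∈ ball (0:ℂ) 1 := by simp
  have hf0 : AnalyticAt ℂ f 0 := hfa 0 h0mem
  have hnhds : ball (0:ℂ) 1 ∈ 𝓝 (0:ℂ) := hball.mem_nhds h0mem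
  have heig' : ∀ᶠ z in 𝓝 (0:ℂ), deriv f (a * z ^ M) = lam * f z :=
    eventually_of_mem hnhds heig
  have hMpos : 0 < M := by omega
  have hdf : AnalyticAt ℂ (deriv f) 0 := hfa.deriv 0 h0mem
  -- f'(0) = lam * f 0
  have e0 : deriv f 0 = lam * f 0 := by
    have := heig 0 h0mem
    simpa [zero_pow hMpos.ne'] using this
  -- f'(0) = 0 via chain rule
  have hinner : HasDerivAt (fun z : ℂ => a * z ^ M) 0 0 := by
    have h1 : HasDerivAt (fun z : ℂ => a * z ^ M) (a * ((M:ℂ) * 0 ^ (M - 1))) 0 :=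
      (hasDerivAt_pow M (0:ℂ)).const_mul a
    simpa [zero_pow (by omega : M - 1 ≠ 0)] using h1
  have hcomp : HasDerivAt (fun z : ℂ => deriv f (a * z ^ M)) 0 0 := by
    have hd2 : HasDerivAt (deriv f) (deriv (deriv f) (a * 0 ^ M)) (a * 0 ^ M) := by
      have : AnalyticAt ℂ (deriv f) (a * 0 ^ M) := by
        simpa [zero_pow hMpos.ne'] using hdf
      exact this.differentiableAt.hasDerivAt
    simpa [Function.comp_def] using hd2.comp 0 hinner
  have hderiv0 : deriv f 0 = 0 := by
    have h1 : deriv (fun z : ℂ => deriv f (a * z ^ M)) 0 =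
        deriv (fun z : ℂ => lam * f z) 0 := Filter.EventuallyEq.deriv_eq heig'
    have h2 : deriv (fun z : ℂ => lam * f z) 0 = lam * deriv f 0 := by
      rw [deriv_const_mul _ hf0.differentiableAt]
    rw [hcomp.deriv] at h1
    have : lam * deriv f 0 = 0 := by rw [← h2, ← h1]
    exact (mul_eq_zero.mp this).resolve_left hlam
  have hfzero : f 0 = 0 := by
    have : lam * f 0 = 0 := by rw [← e0, hderiv0]
    exact (mul_eq_zero.mp this).resolve_left hlam
  -- main claim: f vanishes near 0
  have hev : f =ᶠ[𝓝 (0:ℂ)] 0 := by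
    by_contra hcon
    have hne : analyticOrderAt f 0 ≠ ⊤ := by
      intro h
      exact hcon ((analyticOrderAt_eq_top.mp h).mono fun z hz => hz)
    obtain ⟨n, hn⟩ := WithTop.ne_top_iff_exists.mp hne
    obtain ⟨g, hga, hg0, hg⟩ := (hf0.analyticOrderAt_eq_natCast (n := n)).mp hn.symm
    have hg' : ∀ᶠ z in 𝓝 (0:ℂ), f z = z ^ n * g z := by
      filter_upwards [hg] with z hz; simpa using hz
    -- n ≠ 0 since f 0 = 0
    have hn0 : n ≠ 0 := by
      intro h
      apply hg0
      have := hg'.self_of_nhds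
      simpa [h, hfzero] using this.symm
    obtain ⟨k, rfl⟩ : ∃ k, n = k + 1 := ⟨n - 1, by omega⟩
    -- derivative of f near 0
    set h : ℂ → ℂ := fun w => (k+1 : ℂ) * g w + w * deriv g w with hhdef
    have hQ : ∀ᶠ w in 𝓝 (0:ℂ), deriv f w = w ^ k * h w := by
      have hEd : deriv f =ᶠ[𝓝 (0:ℂ)] deriv (fun z => z ^ (k+1) * g z) :=
        Filter.EventuallyEq.deriv hg'
      filter_upwards [hEd, hga.eventually_analyticAt] with w hw hwg
      rw [hw, deriv_fun_mul (differentiableAt_pow _) hwg.differentiableAt]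
      rw [deriv_pow_field]
      simp only [Nat.add_sub_cancel]
      push_cast
      ring
    have htend : Tendsto (fun z : ℂ => a * z ^ M) (𝓝 0) (𝓝 0) := by
      have hc : Continuous (fun z : ℂ => a * z ^ M) := by continuity
      have := hc.tendsto 0
      simpa [zero_pow hMpos.ne'] using this
    have hQ' : ∀ᶠ z in 𝓝 (0:ℂ), deriv f (a * z ^ M) = (a * z ^ M) ^ k * h (a * z ^ M) :=
      htend.eventually hQ
    have hMain : ∀ᶠ z in 𝓝 (0:ℂ),
        lam * (z ^ (k+1) * g z) = (a * z ^ M) ^ k * h (a * z ^ M) := by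
      filter_upwards [heig', hg', hQ'] with z h1 h2 h3
      rw [← h2, ← h1, h3]
    have hh0 : h 0 = (k+1 : ℂ) * g 0 := by simp [hhdef]
    rcases Nat.eq_zero_or_pos k with hk0 | hkpos
    · -- k = 0 : n = 1
      subst hk0
      have := hMain.self_of_nhds
      simp [zero_pow hMpos.ne', hh0] at this
      exact hg0 this.symm
    · -- k ≥ 1
      have hexp : k + 1 < M * k := by nlinarith
      set m : ℕ := M * k - (k + 1) with hmdef
      have hmpos : 0 < m := by omega
      have hMk : M * k = (k + 1) + m := by omega
      -- for z ≠ 0 : lam * g z = a^k * z^m * h (a z^M)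
      have hcont : ContinuousAt (fun z : ℂ => a ^ k * z ^ m * h (a * z ^ M)) 0 := by
        have hgd : AnalyticAt ℂ (deriv g) 0 := by
          obtain ⟨s, hsm, hsa⟩ := hga.eventually_analyticAt.exists_mem
          exact AnalyticOnNhd.deriv (fun x hx => hsa x hx) 0 (mem_of_mem_nhds hsm)
        have hhc : ContinuousAt h 0 := by
          have : AnalyticAt ℂ h 0 := ((analyticAt_const.mul hga).add
            ((analyticAt_id).mul hgd))
          exact this.continuousAt
        have hcin : ContinuousAt (fun z : ℂ => a * z ^ M) 0 :=
          (continuous_const.mul (continuous_pow M)).continuousAt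
        have hcomp2 : ContinuousAt (h ∘ fun z : ℂ => a * z ^ M) 0 := by
          apply ContinuousAt.comp _ hcin
          simpa [zero_pow hMpos.ne'] using hhc
        exact ((continuous_const.mul (continuous_pow m)).continuousAt).mul hcomp2
      have hT1 : Tendsto (fun z : ℂ => lam * g z) (𝓝[≠] 0) (𝓝 (lam * g 0)) :=
        ((continuousAt_const.mul hga.continuousAt).tendsto).mono_left nhdsWithin_le_nhds
      have hT2 : Tendsto (fun z : ℂ => lam * g z) (𝓝[≠] 0) (𝓝 0) := by
        have heq : ∀ᶠ z in 𝓝[≠] (0:ℂ),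
            lam * g z = a ^ k * z ^ m * h (a * z ^ M) := by
          filter_upwards [eventually_nhdsWithin_of_eventually_nhds hMain,
            self_mem_nhdsWithin] with z hz hz0
          have hz0' : (z : ℂ) ≠ 0 := hz0
          have hcancel : z ^ (k+1) * (lam * g z) =
              z ^ (k+1) * (a ^ k * z ^ m * h (a * z ^ M)) := by
            rw [show z ^ (k+1) * (lam * g z) = lam * (z ^ (k+1) * g z) by ring, hz]
            rw [mul_pow, ← pow_mul, hMk, pow_add]
            ring
          exact mul_left_cancel₀ (pow_ne_zero _ hz0') hcancel
        have hT3 : Tendsto (fun z : ℂ => a ^ k * z ^ m * h (a * z ^ M)) (𝓝[≠] 0) (𝓝 0) := by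
          have := hcont.tendsto.mono_left (nhdsWithin_le_nhds (s := {(0:ℂ)}ᶜ))
          simpa [zero_pow hmpos.ne', zero_pow hMpos.ne'] using this
        exact hT3.congr' (heq.mono fun z hz => hz.symm)
      have : lam * g 0 = 0 := tendsto_nhds_unique hT1 hT2
      exact hg0 ((mul_eq_zero.mp this).resolve_left hlam)
  -- identity theorem
  have := hfa.eqOn_zero_of_preconnected_of_eventuallyEq_zero
    (convex_ball (0:ℂ) 1).isPreconnected h0mem hev
  intro z hz
  exact this hz
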